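/- arXiv:1502.06002 — 5 statements merged into one kernel-verified Lean document; each statement's English description precedes it below -/
import Mathlib

section
/- Let p > 1 and let φ ∈ L^p(X,μ) be nonnegative with f = ∫_X φ dμ. Then ∫_X (Mφ)^p dμ ≤ −(1/(p−1)) f^p + (p/(p−1)) ∫_X φ · (Mφ)^{p−1} dμ. -/
open MeasureTheory Set

/-- The dyadic maximal function on `X = [0,1)` with Lebesgue measure:
`Mφ(x) = sup { μ(I)⁻¹ ∫_I |φ| dμ : I dyadic interval, x ∈ I }`. -/
noncomputable def dyadicMaximal (φ : ℝ → ℝ) (x : ℝ) : ℝ :=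
  ⨆ (n : ℕ) (k : ℕ) (_ : k < 2 ^ n)
    (_ : x ∈ Ico ((k : ℝ) / 2 ^ n) (((k : ℝ) + 1) / 2 ^ n)),
    (2 ^ n : ℝ) * ∫ y in Ico ((k : ℝ) / 2 ^ n) (((k : ℝ) + 1) / 2 ^ n), |φ y|

noncomputable def davg (φ : ℝ → ℝ) (n k : ℕ) : ℝ :=
  (2 ^ n : ℝ) * ∫ y in Ico ((k : ℝ) / 2 ^ n) (((k : ℝ) + 1) / 2 ^ n), |φ y|

noncomputable def Mt (φ : ℝ → ℝ) : ℕ → ℕ → ℕ → ℝ → ℝ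
  | 0, n, k, _ => davg φ n k
  | (m+1), n, k, x => max (davg φ n k)
      (if x < (2 * (k : ℝ) + 1) / 2 ^ (n+1) then Mt φ m (n+1) (2*k) x
       else Mt φ m (n+1) (2*k+1) x)

noncomputable def bet (p t a : ℝ) : ℝ :=
  if t ≤ a then -(a ^ p) else p * t ^ (p-1) * (t - a) - t ^ p

abbrev J (n k : ℕ) : Set ℝ := Ico ((k : ℝ) / 2 ^ n) (((k : ℝ) + 1) / 2 ^ n)

lemma J_subset {n k : ℕ} (hk : k < 2 ^ n) : J n k ⊆ Ico (0:ℝ) 1 := by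
  intro x hx
  have h2 : (0:ℝ) < 2 ^ n := by positivity
  constructor
  · calc (0:ℝ) ≤ (k:ℝ)/2^n := by positivity
    _ ≤ x := hx.1
  · have hk' : ((k:ℝ) + 1) ≤ 2 ^ n := by
      have : ((k:ℕ):ℝ) + 1 ≤ ((2^n : ℕ) : ℝ) := by exact_mod_cast hk
      simpa using this
    calc x < ((k:ℝ)+1)/2^n := hx.2
    _ ≤ 1 := (div_le_one h2).mpr hk'

lemma J_left (n k : ℕ) : J (n+1) (2*k) = Ico ((k:ℝ)/2^n) ((2*(k:ℝ)+1)/2^(n+1)) := by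
  have h1 : (((2*k : ℕ)) : ℝ) / 2^(n+1) = (k:ℝ)/2^n := by
    push_cast; rw [pow_succ]; ring
  have h2 : (((2*k : ℕ)) : ℝ) + 1 = 2*(k:ℝ)+1 := by push_cast; ring
  rw [show J (n+1) (2*k) = Ico (((2*k : ℕ) : ℝ) / 2^(n+1)) ((((2*k:ℕ):ℝ)+1)/2^(n+1)) from rfl, h1, h2]

lemma J_right (n k : ℕ) : J (n+1) (2*k+1) = Ico ((2*(k:ℝ)+1)/2^(n+1)) (((k:ℝ)+1)/2^n) := by
  have h1 : (((2*k+1 : ℕ)) : ℝ) = 2*(k:ℝ)+1 := by push_cast; ring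
  have h2 : ((2*(k:ℝ)+1) + 1) / 2^(n+1) = ((k:ℝ)+1)/2^n := by
    rw [pow_succ]; ring
  rw [show J (n+1) (2*k+1) = Ico (((2*k+1 : ℕ) : ℝ) / 2^(n+1)) ((((2*k+1:ℕ):ℝ)+1)/2^(n+1)) from rfl,
    h1, h2]

lemma J_union (n k : ℕ) : J (n+1) (2*k) ∪ J (n+1) (2*k+1) = J n k := by
  rw [J_left, J_right]
  apply Ico_union_Ico_eq_Ico
  · have h2 : (0:ℝ) < 2 ^ (n+1) := by positivity
    have hn : (0:ℝ) < 2 ^ n := by positivity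
    rw [div_le_div_iff₀ (by positivity) h2]
    rw [pow_succ]; nlinarith [hn]
  · have h2 : (0:ℝ) < 2 ^ (n+1) := by positivity
    have hn : (0:ℝ) < 2 ^ n := by positivity
    rw [div_le_div_iff₀ h2 hn]
    rw [pow_succ]; nlinarith [hn]

lemma volume_J (n k : ℕ) : (volume (J n k)).toReal = 1 / 2^n := by
  have hd : ((k:ℝ)+1)/2^n - (k:ℝ)/2^n = 1/2^n := by field_simp; ring
  rw [Real.volume_Ico, hd, ENNReal.toReal_ofReal (by positivity)]

lemma volume_J' (n k : ℕ) : volume (J n k) = ENNReal.ofReal (1 / 2^n) := by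
  rw [Real.volume_Ico]; congr 1; field_simp; ring
section Part2
variable {φ : ℝ → ℝ}

lemma davg_nonneg (φ : ℝ → ℝ) (n k : ℕ) : 0 ≤ davg φ n k := by
  apply mul_nonneg (by positivity)
  apply integral_nonneg; intro y; exact abs_nonneg _

lemma intJ (hint : IntegrableOn φ (Ico (0:ℝ) 1)) {n k : ℕ} (hk : k < 2^n) :
    IntegrableOn (fun y => |φ y|) (J n k) := MeasureTheory.IntegrableOn.mono_set hint.abs (J_subset hk)

lemma child_left_lt {n k : ℕ} (hk : k < 2^n) : 2*k < 2^(n+1) := by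
  rw [pow_succ]; omega

lemma child_right_lt {n k : ℕ} (hk : k < 2^n) : 2*k+1 < 2^(n+1) := by
  rw [pow_succ]; omega

lemma int_split (hint : IntegrableOn φ (Ico (0:ℝ) 1)) {n k : ℕ} (hk : k < 2^n) :
    ∫ y in J n k, |φ y| = (∫ y in J (n+1) (2*k), |φ y|) + ∫ y in J (n+1) (2*k+1), |φ y| := by
  rw [← J_union n k]
  apply setIntegral_union
  · rw [J_left, J_right]; exact Set.Ico_disjoint_Ico_same
  · exact measurableSet_Ico
  · exact intJ hint (child_left_lt hk)
  · exact intJ hint (child_right_lt hk)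

lemma davg_add (hint : IntegrableOn φ (Ico (0:ℝ) 1)) {n k : ℕ} (hk : k < 2^n) :
    davg φ (n+1) (2*k) + davg φ (n+1) (2*k+1) = 2 * davg φ n k := by
  have h := int_split hint hk
  simp only [davg]
  set A := ∫ y in J (n+1) (2*k), |φ y| with hA
  set B := ∫ y in J (n+1) (2*k+1), |φ y| with hB
  rw [h, pow_succ]; ring

lemma intφ_J (hφ : ∀ x, 0 ≤ φ x) (n k : ℕ) :
    ∫ y in J n k, φ y = (1/2^n) * davg φ n k := by
  have : ∀ y, φ y = |φ y| := fun y => (abs_of_nonneg (hφ y)).symm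
  rw [show (fun y => φ y) = fun y => |φ y| from funext this]
  simp only [davg]; field_simp

lemma Mt_zero (n k : ℕ) (x : ℝ) : Mt φ 0 n k x = davg φ n k := rfl

lemma Mt_succ (m n k : ℕ) (x : ℝ) : Mt φ (m+1) n k x = max (davg φ n k)
    (if x < (2 * (k : ℝ) + 1) / 2 ^ (n+1) then Mt φ m (n+1) (2*k) x
     else Mt φ m (n+1) (2*k+1) x) := rfl

lemma Mt_ge_avg (m n k : ℕ) (x : ℝ) : davg φ n k ≤ Mt φ m n k x := by
  cases m with
  | zero => exact le_refl _
  | succ m => exact le_max_left _ _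

lemma Mt_nonneg (m n k : ℕ) (x : ℝ) : 0 ≤ Mt φ m n k x :=
  le_trans (davg_nonneg φ n k) (Mt_ge_avg m n k x)

lemma Mt_mono (m n k : ℕ) (x : ℝ) : Mt φ m n k x ≤ Mt φ (m+1) n k x := by
  induction m generalizing n k with
  | zero => exact le_max_left _ _
  | succ m ih =>
    rw [Mt_succ, Mt_succ]
    apply max_le_max le_rfl
    split_ifs <;> exact ih _ _

lemma Mt_mono' {m m' : ℕ} (h : m ≤ m') (n k : ℕ) (x : ℝ) : Mt φ m n k x ≤ Mt φ m' n k x := by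
  induction m' with
  | zero =>
    have : m = 0 := by omega
    subst this; exact le_refl _
  | succ m' ih =>
    rcases Nat.lt_or_ge m (m'+1) with h'|h'
    · exact le_trans (ih (by omega)) (Mt_mono m' n k x)
    · have : m = m'+1 := by omega
      subst this; exact le_refl _

lemma Mt_measurable (m n k : ℕ) : Measurable (Mt φ m n k) := by
  induction m generalizing n k with
  | zero => exact measurable_const
  | succ m ih =>
    apply Measurable.max measurable_const
    exact Measurable.ite (measurableSet_Iio (a := (2 * (k : ℝ) + 1) / 2 ^ (n+1))) (ih _ _) (ih _ _)

lemma Mt_bounded (m n k : ℕ) : ∃ C, ∀ x, Mt φ m n k x ≤ C := by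
  induction m generalizing n k with
  | zero => exact ⟨davg φ n k, fun x => le_refl _⟩
  | succ m ih =>
    obtain ⟨C1, h1⟩ := ih (n+1) (2*k)
    obtain ⟨C2, h2⟩ := ih (n+1) (2*k+1)
    refine ⟨max (davg φ n k) (max C1 C2), fun x => ?_⟩
    rw [Mt_succ]
    apply max_le_max le_rfl
    split_ifs
    · exact le_trans (h1 x) (le_max_left _ _)
    · exact le_trans (h2 x) (le_max_right _ _)

lemma Mt_succ_left {m n k : ℕ} {x : ℝ} (hx : x ∈ J (n+1) (2*k)) :
    Mt φ (m+1) n k x = max (davg φ n k) (Mt φ m (n+1) (2*k) x) := by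
  rw [J_left] at hx
  rw [Mt_succ, if_pos hx.2]

lemma Mt_succ_right {m n k : ℕ} {x : ℝ} (hx : x ∈ J (n+1) (2*k+1)) :
    Mt φ (m+1) n k x = max (davg φ n k) (Mt φ m (n+1) (2*k+1) x) := by
  rw [J_right] at hx
  rw [Mt_succ, if_neg (not_lt.mpr hx.1)]

end Part2
section Part3

lemma rpow_sub_one_mul {p : ℝ} (hp : 1 < p) {a : ℝ} (ha : 0 ≤ a) : a ^ (p-1) * a = a ^ p := by
  rcases eq_or_lt_of_le ha with h|h
  · rw [← h, Real.zero_rpow (by linarith), Real.zero_rpow (by linarith), zero_mul]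
  · rw [← Real.rpow_add_one (ne_of_gt h)]; ring_nf

lemma bet_base {p : ℝ} (hp : 1 < p) {t a : ℝ} (ht : 0 ≤ t) (ha : 0 ≤ a) :
    (p-1) * (max t a) ^ p = p * a * (max t a) ^ (p-1) + bet p t a := by
  rcases le_total t a with h|h
  · rw [max_eq_right h, bet, if_pos h]
    have e : a ^ (p-1) * a = a ^ p := rpow_sub_one_mul hp ha
    nlinarith [e]
  · rw [max_eq_left h, bet]
    rcases eq_or_lt_of_le h with he|he
    · rw [if_pos he.ge, ← he]
      have e : a ^ (p-1) * a = a ^ p := rpow_sub_one_mul hp ha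
      nlinarith [e]
    · rw [if_neg (not_le.mpr he)]
      have e : t ^ (p-1) * t = t ^ p := rpow_sub_one_mul hp ht
      nlinarith [e]

lemma bet_g_max {p : ℝ} {t a : ℝ} :
    p * (max t a) ^ (p-1) * (max t a - a) - (max t a) ^ p = bet p t a := by
  rcases le_total t a with h|h
  · rw [max_eq_right h, bet, if_pos h]; ring_nf
  · rw [max_eq_left h, bet]
    rcases eq_or_lt_of_le h with he|he
    · rw [if_pos he.ge, ← he]; ring_nf
    · rw [if_neg (not_le.mpr he)]

lemma bet_max_eq {p : ℝ} (t a : ℝ) : bet p (max t a) a = bet p t a := by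
  rcases le_total t a with h|h
  · rw [max_eq_right h, bet, bet, if_pos le_rfl, if_pos h]
  · rw [max_eq_left h]

lemma young_aux {p : ℝ} (hp : 1 < p) {a s : ℝ} (ha : 0 ≤ a) (hs : 0 ≤ s) :
    p * a * s ^ (p-1) ≤ (p-1) * s ^ p + a ^ p := by
  have hpq : p.HolderConjugate (p/(p-1)) := Real.HolderConjugate.conjExponent hp
  have hne : p - 1 ≠ 0 := by linarith
  have h := Real.young_inequality a (s ^ (p-1)) hpq
  rw [abs_of_nonneg ha, abs_of_nonneg (Real.rpow_nonneg hs _)] at h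
  have h2 : (s ^ (p-1)) ^ (p/(p-1)) = s ^ p := by
    rw [← Real.rpow_mul hs]
    congr 1
    field_simp
  rw [h2] at h
  have hp0 : 0 < p := by linarith
  have h3 : a * s ^ (p-1) ≤ a ^ p / p + s ^ p * ((p-1)/p) := by
    calc a * s ^ (p-1) ≤ a ^ p / p + s ^ p / (p/(p-1)) := h
    _ = a ^ p / p + s ^ p * ((p-1)/p) := by rw [div_div_eq_mul_div]; ring
  have h4 := mul_le_mul_of_nonneg_left h3 hp0.le
  have e5 : p * (a ^ p / p + s ^ p * ((p-1)/p)) = a ^ p + (p-1) * s ^ p := by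
    field_simp
  rw [e5] at h4
  linarith [h4]

lemma bet_le {p : ℝ} (hp : 1 < p) {t a s : ℝ} (ht : 0 ≤ t) (ha : 0 ≤ a) (hts : t ≤ s) :
    bet p t a ≤ p * s ^ (p-1) * (s - a) - s ^ p := by
  have hs : 0 ≤ s := le_trans ht hts
  have hss : s ^ (p-1) * s = s ^ p := rpow_sub_one_mul hp hs
  rw [bet]
  split_ifs with h
  · have := young_aux hp ha hs
    nlinarith [this, hss]
  · push_neg at h
    have ht0 : 0 < t := lt_of_le_of_lt ha h
    have hdiff : ∀ x : ℝ, 0 < x →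
        DifferentiableAt ℝ (fun r : ℝ => (p-1) * r ^ p - p * a * r ^ (p-1)) x := by
      intro x hx0
      exact DifferentiableAt.sub
        ((Real.hasDerivAt_rpow_const (p := p) (Or.inl hx0.ne')).differentiableAt.const_mul _)
        ((Real.hasDerivAt_rpow_const (p := p-1) (Or.inl hx0.ne')).differentiableAt.const_mul _)
    have key : MonotoneOn (fun r : ℝ => (p-1) * r ^ p - p * a * r ^ (p-1)) (Ici t) := by
      apply monotoneOn_of_deriv_nonneg (convex_Ici t)
      · intro x hx
        exact ((hdiff x (lt_of_lt_of_le ht0 hx)).continuousAt).continuousWithinAt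
      · intro x hx
        rw [interior_Ici] at hx
        exact (hdiff x (lt_trans ht0 hx)).differentiableWithinAt
      · intro x hx
        rw [interior_Ici] at hx
        have hx0 : 0 < x := lt_trans ht0 hx
        have hd : HasDerivAt (fun r : ℝ => (p-1) * r ^ p - p * a * r ^ (p-1))
            ((p-1) * (p * x ^ (p-1)) - p * a * ((p-1) * x ^ (p-1-1))) x :=
          HasDerivAt.sub
            ((Real.hasDerivAt_rpow_const (p := p) (Or.inl hx0.ne')).const_mul _)
            ((Real.hasDerivAt_rpow_const (p := p-1) (Or.inl hx0.ne')).const_mul _)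
        have e1 : x ^ (p-1) = x ^ (p-1-1) * x := by
          rw [← Real.rpow_add_one hx0.ne']; ring_nf
        have e2 : (0:ℝ) ≤ x ^ (p-1-1) := Real.rpow_nonneg hx0.le _
        have hax : a ≤ x := by
          have : t < x := hx
          linarith
        have key0 : 0 ≤ p * ((p-1) * (x ^ (p-1-1) * (x - a))) := by
          apply mul_nonneg (by linarith)
          apply mul_nonneg (by linarith)
          apply mul_nonneg e2 (by linarith)
        rw [hd.deriv, e1]
        nlinarith [key0]
    have hmono := key (self_mem_Ici) (show s ∈ Ici t from hts) hts
    simp only at hmono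
    have htt : t ^ (p-1) * t = t ^ p := rpow_sub_one_mul hp ht0.le
    nlinarith [hmono, hss, htt]

end Part3
section Part4
variable {φ : ℝ → ℝ} {p : ℝ}

lemma finJ (n k : ℕ) : IsFiniteMeasure (volume.restrict (J n k)) := by
  constructor
  rw [Measure.restrict_apply_univ, volume_J']
  exact ENNReal.ofReal_lt_top

lemma integrableOn_J_of_bounded {ψ : ℝ → ℝ} (hm : Measurable ψ) (C : ℝ)
    (hb : ∀ x, |ψ x| ≤ C) (n k : ℕ) : IntegrableOn ψ (J n k) := by
  haveI := finJ n k
  exact (integrable_const C).mono' hm.aestronglyMeasurable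
    (Filter.Eventually.of_forall (fun x => by simpa using hb x))

lemma max_Mt_measurable (m n k : ℕ) (t q : ℝ) :
    Measurable (fun x => (max t (Mt φ m n k x)) ^ q) :=
  Measurable.pow (measurable_const.max (Mt_measurable m n k)) measurable_const

lemma max_Mt_bounded (m n k : ℕ) {t q : ℝ} (ht : 0 ≤ t) (hq : 0 ≤ q) :
    ∃ C, ∀ x, |(max t (Mt φ m n k x)) ^ q| ≤ C := by
  obtain ⟨C, hC⟩ := Mt_bounded (φ := φ) m n k
  refine ⟨(max t C) ^ q, fun x => ?_⟩
  rw [abs_of_nonneg (Real.rpow_nonneg (le_max_of_le_left ht) _)]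
  exact Real.rpow_le_rpow (le_max_of_le_left ht) (max_le_max le_rfl (hC x)) hq

lemma int_pow_J (m n k : ℕ) {t q : ℝ} (ht : 0 ≤ t) (hq : 0 ≤ q) (n' k' : ℕ) :
    IntegrableOn (fun x => (max t (Mt φ m n k x)) ^ q) (J n' k') := by
  obtain ⟨C, hC⟩ := max_Mt_bounded (φ := φ) m n k ht hq
  exact integrableOn_J_of_bounded (max_Mt_measurable m n k t q) C hC n' k'

lemma int_mul_pow_J (hint : IntegrableOn φ (Ico (0:ℝ) 1)) (m n k : ℕ) {t q : ℝ}
    (ht : 0 ≤ t) (hq : 0 ≤ q) {n' k' : ℕ} (hk' : k' < 2 ^ n') :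
    IntegrableOn (fun x => φ x * (max t (Mt φ m n k x)) ^ q) (J n' k') := by
  obtain ⟨C, hC⟩ := max_Mt_bounded (φ := φ) m n k ht hq
  have hφJ : IntegrableOn φ (J n' k') := MeasureTheory.IntegrableOn.mono_set hint (J_subset hk')
  have := MeasureTheory.Integrable.bdd_mul hφJ
    (max_Mt_measurable (φ := φ) m n k t q).aestronglyMeasurable
    (c := C) (Filter.Eventually.of_forall fun x => by simpa using hC x)
  exact this.congr (Filter.Eventually.of_forall (fun x => by ring))

lemma key_ineq (hp : 1 < p) (hφ : ∀ x, 0 ≤ φ x) (hint : IntegrableOn φ (Ico (0:ℝ) 1)) :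
    ∀ m n k, k < 2 ^ n → ∀ t : ℝ, 0 ≤ t →
    (p-1) * ∫ x in J n k, (max t (Mt φ m n k x)) ^ p ≤
      (p * ∫ x in J n k, φ x * (max t (Mt φ m n k x)) ^ (p-1))
        + (1/2^n) * bet p t (davg φ n k) := by
  intro m
  induction m with
  | zero =>
    intro n k hk t ht
    have ha : 0 ≤ davg φ n k := davg_nonneg φ n k
    have h1 : (∫ x in J n k, (max t (Mt φ 0 n k x)) ^ p)
        = (1/2^n) * (max t (davg φ n k)) ^ p := by
      simp only [Mt_zero]
      rw [setIntegral_const, measureReal_def, volume_J, smul_eq_mul]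
    have h2 : (∫ x in J n k, φ x * (max t (Mt φ 0 n k x)) ^ (p-1))
        = (1/2^n) * davg φ n k * (max t (davg φ n k)) ^ (p-1) := by
      simp only [Mt_zero]
      rw [integral_mul_const, intφ_J hφ]
    rw [h1, h2]
    have := bet_base hp (t := t) (a := davg φ n k) ht ha
    have h2n : (0:ℝ) < 1/2^n := by positivity
    nlinarith [this, h2n]
  | succ m ih =>
    intro n k hk t ht
    set a := davg φ n k with ha_def
    have ha : 0 ≤ a := davg_nonneg φ n k
    set t' := max t a with ht'_def
    have ht' : 0 ≤ t' := le_max_of_le_left ht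
    have hk1 : 2*k < 2^(n+1) := child_left_lt hk
    have hk2 : 2*k+1 < 2^(n+1) := child_right_lt hk
    set a1 := davg φ (n+1) (2*k) with ha1_def
    set a2 := davg φ (n+1) (2*k+1) with ha2_def
    have ha1 : 0 ≤ a1 := davg_nonneg φ _ _
    have ha2 : 0 ≤ a2 := davg_nonneg φ _ _
    have hsum : a1 + a2 = 2 * a := davg_add hint hk
    -- congruence on children
    have congr1 : ∀ q : ℝ, EqOn (fun x => (max t (Mt φ (m+1) n k x)) ^ q)
        (fun x => (max t' (Mt φ m (n+1) (2*k) x)) ^ q) (J (n+1) (2*k)) := by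
      intro q x hx
      simp only
      rw [Mt_succ_left hx, ← max_assoc]
    have congr2 : ∀ q : ℝ, EqOn (fun x => (max t (Mt φ (m+1) n k x)) ^ q)
        (fun x => (max t' (Mt φ m (n+1) (2*k+1) x)) ^ q) (J (n+1) (2*k+1)) := by
      intro q x hx
      simp only
      rw [Mt_succ_right hx, ← max_assoc]
    have hmeas1 : MeasurableSet (J (n+1) (2*k)) := measurableSet_Ico
    have hmeas2 : MeasurableSet (J (n+1) (2*k+1)) := measurableSet_Ico
    have hdisj : Disjoint (J (n+1) (2*k)) (J (n+1) (2*k+1)) := by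
      rw [J_left, J_right]; exact Set.Ico_disjoint_Ico_same
    -- split the p-integral
    have split1 : (∫ x in J n k, (max t (Mt φ (m+1) n k x)) ^ p)
        = (∫ x in J (n+1) (2*k), (max t' (Mt φ m (n+1) (2*k) x)) ^ p)
          + ∫ x in J (n+1) (2*k+1), (max t' (Mt φ m (n+1) (2*k+1) x)) ^ p := by
      rw [← J_union n k, setIntegral_union hdisj hmeas2
        (int_pow_J (m+1) n k ht (by linarith) _ _) (int_pow_J (m+1) n k ht (by linarith) _ _)]
      rw [setIntegral_congr_fun hmeas1 (congr1 p), setIntegral_congr_fun hmeas2 (congr2 p)]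
    have split2 : (∫ x in J n k, φ x * (max t (Mt φ (m+1) n k x)) ^ (p-1))
        = (∫ x in J (n+1) (2*k), φ x * (max t' (Mt φ m (n+1) (2*k) x)) ^ (p-1))
          + ∫ x in J (n+1) (2*k+1), φ x * (max t' (Mt φ m (n+1) (2*k+1) x)) ^ (p-1) := by
      rw [← J_union n k, setIntegral_union hdisj hmeas2
        (int_mul_pow_J hint (m+1) n k ht (by linarith) hk1)
        (int_mul_pow_J hint (m+1) n k ht (by linarith) hk2)]
      congr 1
      · refine setIntegral_congr_fun hmeas1 (fun x hx => ?_)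
        have h := congr1 (p-1) hx; simp only at h; rw [h]
      · refine setIntegral_congr_fun hmeas2 (fun x hx => ?_)
        have h := congr2 (p-1) hx; simp only at h; rw [h]
    have IH1 := ih (n+1) (2*k) hk1 t' ht'
    have IH2 := ih (n+1) (2*k+1) hk2 t' ht'
    have hb1 : bet p t' a1 ≤ p * t' ^ (p-1) * (t' - a1) - t' ^ p := bet_le hp ht' ha1 le_rfl
    have hb2 : bet p t' a2 ≤ p * t' ^ (p-1) * (t' - a2) - t' ^ p := bet_le hp ht' ha2 le_rfl
    have hbet : (1/2^(n+1) : ℝ) * bet p t' a1 + (1/2^(n+1)) * bet p t' a2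
        ≤ (1/2^n) * bet p t a := by
      have hgmax : p * t' ^ (p-1) * (t' - a) - t' ^ p = bet p t a := bet_g_max
      have h2n : (0:ℝ) < 1/2^(n+1) := by positivity
      have e : (1/2^(n+1) : ℝ) * 2 = 1/2^n := by rw [pow_succ]; field_simp
      calc (1/2^(n+1) : ℝ) * bet p t' a1 + (1/2^(n+1)) * bet p t' a2
          ≤ (1/2^(n+1)) * ((p * t' ^ (p-1) * (t' - a1) - t' ^ p)
            + (p * t' ^ (p-1) * (t' - a2) - t' ^ p)) := by nlinarith [hb1, hb2, h2n]
        _ = (1/2^(n+1)) * (2 * (p * t' ^ (p-1) * (t' - a) - t' ^ p)) := by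
            congr 1; linear_combination (-(p * t' ^ (p-1))) * hsum
        _ = (1/2^n) * bet p t a := by
            rw [← hgmax]
            linear_combination (p * t' ^ (p-1) * (t' - a) - t' ^ p) * e
    rw [split1, split2]
    linarith [IH1, IH2, hbet]

end Part4
section Part5
variable {φ : ℝ → ℝ} {p : ℝ}

lemma J00 : J 0 0 = Ico (0:ℝ) 1 := by unfold J; norm_num

lemma root_ineq (hp : 1 < p) (hφ : ∀ x, 0 ≤ φ x) (hint : IntegrableOn φ (Ico (0:ℝ) 1)) (m : ℕ) :
    (p-1) * (∫ x in Ico (0:ℝ) 1, (Mt φ m 0 0 x) ^ p) + (davg φ 0 0) ^ p ≤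
      p * ∫ x in Ico (0:ℝ) 1, φ x * (Mt φ m 0 0 x) ^ (p-1) := by
  have h := key_ineq hp hφ hint m 0 0 (by norm_num) (davg φ 0 0) (davg_nonneg φ 0 0)
  have hmax : ∀ x : ℝ, max (davg φ 0 0) (Mt φ m 0 0 x) = Mt φ m 0 0 x :=
    fun x => max_eq_right (Mt_ge_avg m 0 0 x)
  simp only [hmax] at h
  rw [J00] at h
  rw [bet, if_pos le_rfl] at h
  norm_num at h
  linarith [h]

lemma ennreal_iSup_rpow {q : ℝ} (hq : 0 < q) (f : ℕ → ENNReal) :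
    (⨆ m, f m) ^ q = ⨆ m, (f m) ^ q := by
  apply le_antisymm
  · have h1 : ∀ m, f m ≤ (⨆ m, (f m) ^ q) ^ (1/q) := by
      intro m
      calc f m = ((f m) ^ q) ^ (1/q) := by
            rw [← ENNReal.rpow_mul, mul_one_div, div_self hq.ne', ENNReal.rpow_one]
        _ ≤ (⨆ m, (f m) ^ q) ^ (1/q) :=
            ENNReal.rpow_le_rpow (le_iSup (fun m => (f m) ^ q) m) (by positivity)
    calc (⨆ m, f m) ^ q ≤ ((⨆ m, (f m) ^ q) ^ (1/q)) ^ q :=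
          ENNReal.rpow_le_rpow (iSup_le h1) hq.le
      _ = ⨆ m, (f m) ^ q := by
          rw [← ENNReal.rpow_mul, one_div_mul_cancel hq.ne', ENNReal.rpow_one]
  · exact iSup_le fun m => ENNReal.rpow_le_rpow (le_iSup f m) hq.le

lemma floor_eq_of_mem {n k : ℕ} {x : ℝ} (hx : x ∈ J n k) : Nat.floor (2^n * x) = k := by
  have h2 : (0:ℝ) < 2^n := by positivity
  have hx0 : 0 ≤ x := le_trans (by positivity) hx.1
  rw [Nat.floor_eq_iff (mul_nonneg h2.le hx0)]
  constructor
  · rw [mul_comm]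
    exact (div_le_iff₀ h2).mp hx.1
  · rw [mul_comm]
    exact (lt_div_iff₀ h2).mp hx.2

lemma mem_J_floor {n : ℕ} {x : ℝ} (hx : x ∈ Ico (0:ℝ) 1) :
    x ∈ J n (Nat.floor (2^n * x)) ∧ Nat.floor (2^n * x) < 2^n := by
  have h2 : (0:ℝ) < 2^n := by positivity
  have hx0 : (0:ℝ) ≤ 2^n * x := by
    apply mul_nonneg h2.le hx.1
  refine ⟨⟨?_, ?_⟩, ?_⟩
  · rw [div_le_iff₀ h2]
    calc ((Nat.floor (2^n * x) : ℝ)) ≤ 2^n * x := Nat.floor_le hx0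
      _ = x * 2^n := mul_comm _ _
  · rw [lt_div_iff₀ h2]
    calc x * 2^n = 2^n * x := mul_comm _ _
      _ < Nat.floor (2^n * x) + 1 := Nat.lt_floor_add_one _
  · have : (2:ℝ)^n * x < 2^n := by nlinarith [hx.2, h2]
    have := (Nat.floor_lt hx0).mpr (by
      calc (2:ℝ)^n * x < 2^n := this
      _ = ((2^n : ℕ) : ℝ) := by push_cast; ring)
    exact this

lemma mem_child_left {n k : ℕ} {x : ℝ} (hx : x ∈ J n k)
    (h : x < (2*(k:ℝ)+1)/2^(n+1)) : x ∈ J (n+1) (2*k) := by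
  rw [J_left]; exact ⟨hx.1, h⟩

lemma mem_child_right {n k : ℕ} {x : ℝ} (hx : x ∈ J n k)
    (h : ¬ x < (2*(k:ℝ)+1)/2^(n+1)) : x ∈ J (n+1) (2*k+1) := by
  rw [J_right]; exact ⟨not_lt.mp h, hx.2⟩

lemma descend (m : ℕ) : ∀ n k, k < 2^n → ∀ x ∈ J n k, ∀ j ≤ m,
    davg φ (n+j) (Nat.floor (2^(n+j) * x)) ≤ Mt φ m n k x := by
  induction m with
  | zero =>
    intro n k hk x hx j hj
    interval_cases j
    simp only [Nat.add_zero, floor_eq_of_mem hx]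
    exact le_refl _
  | succ m ih =>
    intro n k hk x hx j hj
    rcases Nat.eq_zero_or_pos j with hj0|hj0
    · subst hj0
      simp only [Nat.add_zero, floor_eq_of_mem hx]
      exact Mt_ge_avg _ _ _ _
    · obtain ⟨j', rfl⟩ := Nat.exists_eq_succ_of_ne_zero hj0.ne'
      have e : n+(j'+1) = (n+1)+j' := by omega
      rw [Mt_succ, e]
      by_cases hc : x < (2*(k:ℝ)+1)/2^(n+1)
      · rw [if_pos hc]
        exact le_trans (ih (n+1) (2*k) (child_left_lt hk) x (mem_child_left hx hc) j' (by omega))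
          (le_max_right _ _)
      · rw [if_neg hc]
        exact le_trans (ih (n+1) (2*k+1) (child_right_lt hk) x (mem_child_right hx hc) j' (by omega))
          (le_max_right _ _)

lemma ascend (m : ℕ) : ∀ n k, k < 2^n → ∀ x ∈ J n k, ∃ j ≤ m,
    Mt φ m n k x = davg φ (n+j) (Nat.floor (2^(n+j) * x)) := by
  induction m with
  | zero =>
    intro n k hk x hx
    exact ⟨0, le_refl _, by simp only [Nat.add_zero, floor_eq_of_mem hx]; rfl⟩
  | succ m ih =>
    intro n k hk x hx
    by_cases hc : x < (2*(k:ℝ)+1)/2^(n+1)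
    · have hx' := mem_child_left hx hc
      rcases max_cases (davg φ n k) (Mt φ m (n+1) (2*k) x) with ⟨he, _⟩|⟨he, _⟩
      · exact ⟨0, by omega, by
          rw [Mt_succ, if_pos hc, he]
          simp only [Nat.add_zero, floor_eq_of_mem hx]⟩
      · obtain ⟨j', hj', hej⟩ := ih (n+1) (2*k) (child_left_lt hk) x hx'
        refine ⟨j'+1, by omega, ?_⟩
        rw [Mt_succ, if_pos hc, he, hej, show n+(j'+1) = (n+1)+j' from by omega]
    · have hx' := mem_child_right hx hc
      rcases max_cases (davg φ n k) (Mt φ m (n+1) (2*k+1) x) with ⟨he, _⟩|⟨he, _⟩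
      · exact ⟨0, by omega, by
          rw [Mt_succ, if_neg hc, he]
          simp only [Nat.add_zero, floor_eq_of_mem hx]⟩
      · obtain ⟨j', hj', hej⟩ := ih (n+1) (2*k+1) (child_right_lt hk) x hx'
        refine ⟨j'+1, by omega, ?_⟩
        rw [Mt_succ, if_neg hc, he, hej, show n+(j'+1) = (n+1)+j' from by omega]

end Part5
section Part6
variable {φ : ℝ → ℝ}

lemma real_iSup_prop_false {q : Prop} (h : ¬ q) (f : q → ℝ) : iSup f = 0 := by
  haveI : IsEmpty q := ⟨h⟩
  exact Real.iSup_of_isEmpty f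

lemma dM_def (x : ℝ) : dyadicMaximal φ x
    = ⨆ (n : ℕ), ⨆ (k : ℕ), ⨆ (_ : k < 2^n), ⨆ (_ : x ∈ J n k), davg φ n k := rfl

lemma inner_sup {x : ℝ} (hx : x ∈ Ico (0:ℝ) 1) (n : ℕ) :
    (⨆ (k : ℕ), ⨆ (_ : k < 2^n), ⨆ (_ : x ∈ J n k), davg φ n k)
      = davg φ n (Nat.floor (2^n * x)) := by
  obtain ⟨hxJ, hk0⟩ := mem_J_floor (n := n) hx
  set k0 := Nat.floor (2^n * x) with hk0def
  have hg : ∀ k : ℕ, (⨆ (_ : k < 2^n), ⨆ (_ : x ∈ J n k), davg φ n k)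
      = if k = k0 then davg φ n k0 else 0 := by
    intro k
    by_cases he : k = k0
    · subst he
      rw [if_pos rfl]
      haveI : Nonempty (k0 < 2^n) := ⟨hk0⟩
      haveI : Nonempty (x ∈ J n k0) := ⟨hxJ⟩
      rw [ciSup_const, ciSup_const]
    · rw [if_neg he]
      by_cases hlt : k < 2^n
      · have hxk : ¬ (x ∈ J n k) := fun hmem => he (floor_eq_of_mem hmem).symm
        have : ∀ (_ : k < 2^n), (⨆ (_ : x ∈ J n k), davg φ n k) = 0 :=
          fun _ => real_iSup_prop_false hxk _
        rw [iSup_congr this]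
        haveI : Nonempty (k < 2^n) := ⟨hlt⟩
        rw [ciSup_const]
      · exact real_iSup_prop_false hlt _
  have hbdd : BddAbove (range (fun k => ⨆ (_ : k < 2^n), ⨆ (_ : x ∈ J n k), davg φ n k)) := by
    refine ⟨max (davg φ n k0) 0, ?_⟩
    rintro y ⟨k, rfl⟩
    show (⨆ (_ : k < 2^n), ⨆ (_ : x ∈ J n k), davg φ n k) ≤ _
    rw [hg k]
    split_ifs
    · exact le_max_left _ _
    · exact le_max_right _ _
  apply le_antisymm
  · refine ciSup_le fun k => ?_
    show (⨆ (_ : k < 2^n), ⨆ (_ : x ∈ J n k), davg φ n k) ≤ _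
    rw [hg k]
    split_ifs
    · exact le_rfl
    · exact davg_nonneg φ n k0
  · have h0 : (⨆ (_ : k0 < 2^n), ⨆ (_ : x ∈ J n k0), davg φ n k0) = davg φ n k0 := by
      rw [hg k0, if_pos rfl]
    exact le_trans (le_of_eq h0.symm) (le_ciSup hbdd k0)

lemma dM_eq {x : ℝ} (hx : x ∈ Ico (0:ℝ) 1) :
    dyadicMaximal φ x = ⨆ n, davg φ n (Nat.floor (2^n * x)) := by
  rw [dM_def]
  exact iSup_congr (fun n => inner_sup hx n)

noncomputable def Bfun (φ : ℝ → ℝ) (x : ℝ) : ENNReal := ⨆ m, ENNReal.ofReal (Mt φ m 0 0 x)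

lemma Bfun_measurable : Measurable (Bfun φ) :=
  Measurable.iSup (fun m => (Mt_measurable m 0 0).ennreal_ofReal)

lemma Bfun_eq {x : ℝ} (hx : x ∈ Ico (0:ℝ) 1) :
    Bfun φ x = ⨆ n, ENNReal.ofReal (davg φ n (Nat.floor (2^n * x))) := by
  have hxJ : x ∈ J 0 0 := J00 ▸ hx
  apply le_antisymm
  · apply iSup_le; intro m
    obtain ⟨j, _, he⟩ := ascend m 0 0 (by norm_num) x hxJ
    simp only [Nat.zero_add] at he
    rw [he]
    exact le_iSup (fun n => ENNReal.ofReal (davg φ n (Nat.floor (2^n * x)))) j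
  · apply iSup_le; intro n
    have h := descend (φ := φ) n 0 0 (by norm_num) x hxJ n le_rfl
    simp only [Nat.zero_add] at h
    exact le_trans (ENNReal.ofReal_le_ofReal h)
      (le_iSup (fun m => ENNReal.ofReal (Mt φ m 0 0 x)) n)

lemma dM_ofReal {x : ℝ} (hx : x ∈ Ico (0:ℝ) 1) (hB : Bfun φ x ≠ ⊤) :
    ENNReal.ofReal (dyadicMaximal φ x) = Bfun φ x ∧ 0 ≤ dyadicMaximal φ x := by
  have hBeq := Bfun_eq (φ := φ) hx
  set u : ℕ → ℝ := fun n => davg φ n (Nat.floor (2^n * x)) with hu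
  have hub : ∀ n, u n ≤ (Bfun φ x).toReal := by
    intro n
    have h1 : ENNReal.ofReal (u n) ≤ Bfun φ x := by
      rw [hBeq]; exact le_iSup (fun n => ENNReal.ofReal (u n)) n
    have := ENNReal.toReal_mono hB h1
    rwa [ENNReal.toReal_ofReal (davg_nonneg φ _ _)] at this
  have hbdd : BddAbove (range u) := ⟨(Bfun φ x).toReal, by rintro y ⟨n, rfl⟩; exact hub n⟩
  rw [dM_eq hx]
  constructor
  · apply le_antisymm
    · exact ENNReal.ofReal_le_of_le_toReal (ciSup_le hub)
    · rw [hBeq]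
      exact iSup_le (fun n => ENNReal.ofReal_le_ofReal (le_ciSup hbdd n))
  · exact Real.iSup_nonneg (fun n => davg_nonneg φ _ _)

end Part6
section Part7
variable {φ : ℝ → ℝ} {p : ℝ}

lemma davg00 (hφ : ∀ x, 0 ≤ φ x) : davg φ 0 0 = ∫ x in Ico (0:ℝ) 1, φ x := by
  have h : davg φ 0 0 = ∫ x in J 0 0, |φ x| := by
    show (2:ℝ)^(0:ℕ) * ∫ y in J 0 0, |φ y| = _
    rw [pow_zero, one_mul]
  rw [h, J00]
  exact setIntegral_congr_fun measurableSet_Ico (fun x _ => abs_of_nonneg (hφ x))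

lemma int_Mtpow (m : ℕ) {q : ℝ} (hq : 0 ≤ q) :
    IntegrableOn (fun x => (Mt φ m 0 0 x) ^ q) (Ico (0:ℝ) 1) := by
  rw [← J00]
  obtain ⟨C, hC⟩ := Mt_bounded (φ := φ) m 0 0
  apply integrableOn_J_of_bounded (Measurable.pow (Mt_measurable m 0 0) measurable_const)
    ((max C 0) ^ q)
  intro x
  rw [abs_of_nonneg (Real.rpow_nonneg (Mt_nonneg m 0 0 x) _)]
  exact Real.rpow_le_rpow (Mt_nonneg m 0 0 x) (le_trans (hC x) (le_max_left _ _)) hq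

lemma int_phiMtpow (hint : IntegrableOn φ (Ico (0:ℝ) 1)) (m : ℕ) {q : ℝ} (hq : 0 ≤ q) :
    IntegrableOn (fun x => φ x * (Mt φ m 0 0 x) ^ q) (Ico (0:ℝ) 1) := by
  obtain ⟨C, hC⟩ := Mt_bounded (φ := φ) m 0 0
  have hb : ∀ x, ‖(Mt φ m 0 0 x) ^ q‖ ≤ (max C 0) ^ q := by
    intro x
    rw [Real.norm_of_nonneg (Real.rpow_nonneg (Mt_nonneg m 0 0 x) _)]
    exact Real.rpow_le_rpow (Mt_nonneg m 0 0 x) (le_trans (hC x) (le_max_left _ _)) hq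
  have := MeasureTheory.Integrable.bdd_mul hint
    ((Measurable.pow (Mt_measurable (φ := φ) m 0 0) (measurable_const : Measurable fun _ : ℝ => q))).aestronglyMeasurable
    (c := (max C 0) ^ q) (Filter.Eventually.of_forall hb)
  exact this.congr (Filter.Eventually.of_forall (fun x => by ring))

lemma absorb (hp : 1 < p) {X D : ENNReal} (hX : X ≠ ⊤) (hD : D ≠ ⊤)
    (h : ENNReal.ofReal (p-1) * X ≤ D * X ^ ((p-1)/p)) :
    X ≤ (D / ENNReal.ofReal (p-1)) ^ p := by
  have hp0 : (0:ℝ) < p := by linarith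
  have hc0 : ENNReal.ofReal (p-1) ≠ 0 := by
    rw [Ne, ENNReal.ofReal_eq_zero]; push_neg; linarith
  have hct : ENNReal.ofReal (p-1) ≠ ⊤ := ENNReal.ofReal_ne_top
  rcases eq_or_ne X 0 with h0 | h0
  · rw [h0]; exact zero_le
  · have hY0 : X ^ ((p-1)/p) ≠ 0 := by
      simp [ENNReal.rpow_eq_zero_iff, h0, hX]
    have hYt : X ^ ((p-1)/p) ≠ ⊤ := by
      simp [ENNReal.rpow_eq_top_iff, h0, hX]
    have hXsplit : X ^ ((p-1)/p) * X ^ (1/p) = X := by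
      rw [← ENNReal.rpow_add _ _ h0 hX]
      have e : (p-1)/p + 1/p = 1 := by field_simp; ring
      rw [e, ENNReal.rpow_one]
    have h2 : (ENNReal.ofReal (p-1) * X ^ (1/p)) * X ^ ((p-1)/p) ≤ D * X ^ ((p-1)/p) := by
      calc (ENNReal.ofReal (p-1) * X ^ (1/p)) * X ^ ((p-1)/p)
          = ENNReal.ofReal (p-1) * (X ^ ((p-1)/p) * X ^ (1/p)) := by ring
        _ = ENNReal.ofReal (p-1) * X := by rw [hXsplit]
        _ ≤ D * X ^ ((p-1)/p) := h
    have h3 : ENNReal.ofReal (p-1) * X ^ (1/p) ≤ D :=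
      (ENNReal.mul_le_mul_iff_left hY0 hYt).mp h2
    have h4 : X ^ (1/p) ≤ D / ENNReal.ofReal (p-1) := by
      rw [ENNReal.le_div_iff_mul_le (Or.inl hc0) (Or.inl hct), mul_comm]
      exact h3
    calc X = (X ^ (1/p)) ^ p := by
          rw [← ENNReal.rpow_mul, one_div_mul_cancel hp0.ne', ENNReal.rpow_one]
      _ ≤ (D / ENNReal.ofReal (p-1)) ^ p := ENNReal.rpow_le_rpow h4 hp0.le

end Part7
theorem stmt5 (p : ℝ) (hp : 1 < p)
    (φ : ℝ → ℝ) (hφ : ∀ x, 0 ≤ φ x)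
    (hmem : MemLp φ (ENNReal.ofReal p) (volume.restrict (Ico (0 : ℝ) 1)))
    (f : ℝ) (hf : f = ∫ x in Ico (0 : ℝ) 1, φ x) :
    (∫ x in Ico (0 : ℝ) 1, dyadicMaximal φ x ^ p) ≤
      -(1 / (p - 1)) * f ^ p
        + p / (p - 1) * (∫ x in Ico (0 : ℝ) 1, φ x * dyadicMaximal φ x ^ (p - 1)) := by
  have hp0 : (0:ℝ) < p := by linarith
  have hp1 : (0:ℝ) < p - 1 := by linarith
  haveI : IsFiniteMeasure (volume.restrict (Ico (0:ℝ) 1)) := by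
    constructor
    rw [Measure.restrict_apply_univ, Real.volume_Ico]
    exact ENNReal.ofReal_lt_top
  have hint : IntegrableOn φ (Ico (0:ℝ) 1) :=
    hmem.integrable (ENNReal.one_le_ofReal.mpr hp.le)
  have hf0 : 0 ≤ f := by
    rw [hf]; exact setIntegral_nonneg measurableSet_Ico (fun x _ => hφ x)
  have hfavg : davg φ 0 0 = f := by rw [davg00 hφ, hf]
  -- measurability helpers
  have hMtm : ∀ m : ℕ, Measurable fun x => ENNReal.ofReal (Mt φ m 0 0 x) :=
    fun m => (Mt_measurable m 0 0).ennreal_ofReal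
  have hBm : Measurable (Bfun φ) := Bfun_measurable
  have hφae : AEMeasurable (fun x => ENNReal.ofReal (φ x)) (volume.restrict (Ico (0:ℝ) 1)) :=
    hmem.1.aemeasurable.ennreal_ofReal
  -- key ENNReal quantities
  set A : ENNReal := ∫⁻ x in Ico (0:ℝ) 1, (ENNReal.ofReal (φ x)) ^ p with hA_def
  set Xm : ℕ → ENNReal :=
    fun m => ∫⁻ x in Ico (0:ℝ) 1, (ENNReal.ofReal (Mt φ m 0 0 x)) ^ p with hXm_def
  set X : ENNReal := ∫⁻ x in Ico (0:ℝ) 1, (Bfun φ x) ^ p with hX_def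
  set Rm : ℕ → ENNReal := fun m =>
    ∫⁻ x in Ico (0:ℝ) 1, ENNReal.ofReal (φ x) * (ENNReal.ofReal (Mt φ m 0 0 x)) ^ (p-1)
    with hRm_def
  set R : ENNReal := ∫⁻ x in Ico (0:ℝ) 1, ENNReal.ofReal (φ x) * (Bfun φ x) ^ (p-1) with hR_def
  -- A is finite
  have hA : A ≠ ⊤ := by
    have h1 := hmem.2
    rw [eLpNorm_eq_lintegral_rpow_enorm_toReal (by simp [hp0.ne']; linarith) ENNReal.ofReal_ne_top] at h1
    rw [ENNReal.toReal_ofReal hp0.le] at h1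
    have h2 := (ENNReal.rpow_lt_top_iff_of_pos (by positivity : (0:ℝ) < 1/p)).mp h1
    have h3 : A = ∫⁻ x in Ico (0:ℝ) 1, ‖φ x‖ₑ ^ p := by
      rw [hA_def]
      apply lintegral_congr
      intro x
      congr 1
      rw [← ofReal_norm_eq_enorm, Real.norm_of_nonneg (hφ x)]
    rw [h3]
    exact h2.ne
  -- X as supremum of the Xm
  have hXsup : X = ⨆ m, Xm m := by
    rw [hX_def]
    have hpw : ∀ x, (Bfun φ x) ^ p = ⨆ m, (ENNReal.ofReal (Mt φ m 0 0 x)) ^ p :=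
      fun x => ennreal_iSup_rpow hp0 _
    rw [lintegral_congr hpw]
    exact lintegral_iSup (fun m => (hMtm m).pow measurable_const)
      (fun m m' hmm' x => ENNReal.rpow_le_rpow
        (ENNReal.ofReal_le_ofReal (Mt_mono' hmm' 0 0 x)) hp0.le)
  -- conversions to real integrals
  have hXmeq : ∀ m, Xm m = ENNReal.ofReal (∫ x in Ico (0:ℝ) 1, (Mt φ m 0 0 x) ^ p) := by
    intro m
    rw [ofReal_integral_eq_lintegral_ofReal (int_Mtpow m hp0.le)
      (Filter.Eventually.of_forall (fun x => Real.rpow_nonneg (Mt_nonneg m 0 0 x) _))]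
    exact lintegral_congr fun x => ENNReal.ofReal_rpow_of_nonneg (Mt_nonneg m 0 0 x) hp0.le
  have hRmeq : ∀ m, Rm m
      = ENNReal.ofReal (∫ x in Ico (0:ℝ) 1, φ x * (Mt φ m 0 0 x) ^ (p-1)) := by
    intro m
    rw [ofReal_integral_eq_lintegral_ofReal (int_phiMtpow hint m (by linarith))
      (Filter.Eventually.of_forall (fun x =>
        mul_nonneg (hφ x) (Real.rpow_nonneg (Mt_nonneg m 0 0 x) _)))]
    apply lintegral_congr
    intro x
    rw [ENNReal.ofReal_mul (hφ x), ENNReal.ofReal_rpow_of_nonneg (Mt_nonneg m 0 0 x) (by linarith)]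
  have hXmfin : ∀ m, Xm m ≠ ⊤ := fun m => by rw [hXmeq m]; exact ENNReal.ofReal_ne_top
  -- the key inequality for each m, in ENNReal
  have hMain_m : ∀ m, ENNReal.ofReal (p-1) * Xm m + ENNReal.ofReal (f ^ p)
      ≤ ENNReal.ofReal p * Rm m := by
    intro m
    have h := root_ineq hp hφ hint m
    rw [hfavg] at h
    have hL : 0 ≤ ∫ x in Ico (0:ℝ) 1, (Mt φ m 0 0 x) ^ p :=
      setIntegral_nonneg measurableSet_Ico (fun x _ => Real.rpow_nonneg (Mt_nonneg m 0 0 x) _)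
    rw [hXmeq m, hRmeq m, ← ENNReal.ofReal_mul (by linarith : (0:ℝ) ≤ p-1),
      ← ENNReal.ofReal_mul hp0.le,
      ← ENNReal.ofReal_add (mul_nonneg (by linarith) hL) (Real.rpow_nonneg hf0 _)]
    exact ENNReal.ofReal_le_ofReal h
  -- Hölder
  have hconj : p.HolderConjugate (p/(p-1)) := Real.HolderConjugate.conjExponent hp
  have hq1 : 1/(p/(p-1)) = (p-1)/p := one_div_div _ _
  have hpexp : (p-1) * (p/(p-1)) = p := by field_simp
  have hHold : ∀ (g : ℝ → ENNReal), Measurable g →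
      (∫⁻ x in Ico (0:ℝ) 1, ENNReal.ofReal (φ x) * (g x) ^ (p-1))
        ≤ A ^ (1/p) * (∫⁻ x in Ico (0:ℝ) 1, (g x) ^ p) ^ ((p-1)/p) := by
    intro g hg
    have h := ENNReal.lintegral_mul_le_Lp_mul_Lq (volume.restrict (Ico (0:ℝ) 1)) hconj hφae
      ((hg.pow (measurable_const : Measurable fun _ : ℝ => p - 1)).aemeasurable)
    simp only [Pi.mul_apply] at h
    calc (∫⁻ x in Ico (0:ℝ) 1, ENNReal.ofReal (φ x) * (g x) ^ (p-1)) ≤ _ := h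
      _ = A ^ (1/p) * (∫⁻ x in Ico (0:ℝ) 1, (g x) ^ p) ^ ((p-1)/p) := by
        rw [← hA_def, hq1]
        congr 2
        apply lintegral_congr
        intro x
        rw [← ENNReal.rpow_mul, hpexp]
  -- uniform bound on Xm, hence X finite
  have hDfin : ENNReal.ofReal p * A ^ (1/p) ≠ ⊤ :=
    ENNReal.mul_ne_top ENNReal.ofReal_ne_top (ENNReal.rpow_ne_top_of_nonneg (by positivity) hA)
  have hK : ∀ m, Xm m ≤ ((ENNReal.ofReal p * A ^ (1/p)) / ENNReal.ofReal (p-1)) ^ p := by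
    intro m
    apply absorb hp (hXmfin m) hDfin
    calc ENNReal.ofReal (p-1) * Xm m ≤ ENNReal.ofReal p * Rm m :=
          le_trans le_self_add (hMain_m m)
      _ ≤ ENNReal.ofReal p * (A ^ (1/p) * (Xm m) ^ ((p-1)/p)) :=
          mul_le_mul_right (hHold _ (hMtm m)) _
      _ = (ENNReal.ofReal p * A ^ (1/p)) * (Xm m) ^ ((p-1)/p) := by rw [mul_assoc]
  have hXfin : X ≠ ⊤ := by
    rw [hXsup]
    have hKfin : ((ENNReal.ofReal p * A ^ (1/p)) / ENNReal.ofReal (p-1)) ^ p ≠ ⊤ := by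
      apply ENNReal.rpow_ne_top_of_nonneg hp0.le
      exact (ENNReal.div_lt_top hDfin (by rw [Ne, ENNReal.ofReal_eq_zero]; push_neg; linarith)).ne
    exact ne_top_of_le_ne_top hKfin (iSup_le hK)
  have hRfin : R ≠ ⊤ := by
    have h := hHold (Bfun φ) hBm
    rw [← hX_def, ← hR_def] at h
    exact ne_top_of_le_ne_top (ENNReal.mul_ne_top
      (ENNReal.rpow_ne_top_of_nonneg (by positivity) hA)
      (ENNReal.rpow_ne_top_of_nonneg (by positivity) hXfin)) h
  -- the main ENNReal inequality
  have hMain : ENNReal.ofReal (p-1) * X + ENNReal.ofReal (f ^ p) ≤ ENNReal.ofReal p * R := by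
    rw [hXsup, ENNReal.mul_iSup, ENNReal.iSup_add]
    apply iSup_le
    intro m
    refine le_trans (hMain_m m) (mul_le_mul_right ?_ _)
    rw [hRm_def, hR_def]
    apply lintegral_mono
    intro x
    exact mul_le_mul_right (ENNReal.rpow_le_rpow
      (le_iSup (fun m => ENNReal.ofReal (Mt φ m 0 0 x)) m) (by linarith)) _
  -- a.e. facts
  have hae_lt : ∀ᵐ x ∂(volume.restrict (Ico (0:ℝ) 1)), Bfun φ x < ⊤ := by
    have h := ae_lt_top (μ := volume.restrict (Ico (0:ℝ) 1))
      (hBm.pow (measurable_const : Measurable fun _ : ℝ => p)) (by rw [← hX_def]; exact hXfin)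
    filter_upwards [h] with x hx
    exact (ENNReal.rpow_lt_top_iff_of_pos hp0).mp hx
  have hae_mem : ∀ᵐ x ∂(volume.restrict (Ico (0:ℝ) 1)), x ∈ Ico (0:ℝ) 1 :=
    ae_restrict_mem measurableSet_Ico
  have haeq : (fun x => dyadicMaximal φ x)
      =ᶠ[ae (volume.restrict (Ico (0:ℝ) 1))] fun x => (Bfun φ x).toReal := by
    filter_upwards [hae_lt, hae_mem] with x hlt hmemx
    obtain ⟨he, hnn⟩ := dM_ofReal hmemx hlt.ne
    rw [← he, ENNReal.toReal_ofReal hnn]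
  -- identify the two real integrals
  have hLHS : (∫ x in Ico (0:ℝ) 1, dyadicMaximal φ x ^ p) = X.toReal := by
    have h1 : (∫ x in Ico (0:ℝ) 1, dyadicMaximal φ x ^ p)
        = ∫ x in Ico (0:ℝ) 1, ((Bfun φ x).toReal) ^ p := by
      apply integral_congr_ae
      filter_upwards [haeq] with x hx
      rw [show dyadicMaximal φ x = (Bfun φ x).toReal from hx]
    rw [h1, integral_eq_lintegral_of_nonneg_ae
      (Filter.Eventually.of_forall (fun x => Real.rpow_nonneg ENNReal.toReal_nonneg _))
      ((ENNReal.measurable_toReal.comp hBm).pow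
        (measurable_const : Measurable fun _ : ℝ => p)).aestronglyMeasurable]
    rw [hX_def]
    congr 1
    apply lintegral_congr_ae
    filter_upwards [hae_lt] with x hlt
    rw [← ENNReal.ofReal_rpow_of_nonneg ENNReal.toReal_nonneg hp0.le,
      ENNReal.ofReal_toReal hlt.ne]
  have hRHS : (∫ x in Ico (0:ℝ) 1, φ x * dyadicMaximal φ x ^ (p-1)) = R.toReal := by
    have h1 : (∫ x in Ico (0:ℝ) 1, φ x * dyadicMaximal φ x ^ (p-1))
        = ∫ x in Ico (0:ℝ) 1, φ x * ((Bfun φ x).toReal) ^ (p-1) := by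
      apply integral_congr_ae
      filter_upwards [haeq] with x hx
      rw [show dyadicMaximal φ x = (Bfun φ x).toReal from hx]
    rw [h1, integral_eq_lintegral_of_nonneg_ae
      (Filter.Eventually.of_forall (fun x =>
        mul_nonneg (hφ x) (Real.rpow_nonneg ENNReal.toReal_nonneg _)))
      (hmem.1.mul ((ENNReal.measurable_toReal.comp hBm).pow
        (measurable_const : Measurable fun _ : ℝ => p - 1)).aestronglyMeasurable)]
    rw [hR_def]
    congr 1
    apply lintegral_congr_ae
    filter_upwards [hae_lt] with x hlt
    rw [ENNReal.ofReal_mul (hφ x), ← ENNReal.ofReal_rpow_of_nonneg ENNReal.toReal_nonneg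
      (by linarith : (0:ℝ) ≤ p - 1), ENNReal.ofReal_toReal hlt.ne]
  -- final real computation
  have hfin := ENNReal.toReal_mono (ENNReal.mul_ne_top ENNReal.ofReal_ne_top hRfin) hMain
  rw [ENNReal.toReal_add (ENNReal.mul_ne_top ENNReal.ofReal_ne_top hXfin) ENNReal.ofReal_ne_top,
    ENNReal.toReal_mul, ENNReal.toReal_mul, ENNReal.toReal_ofReal (by linarith : (0:ℝ) ≤ p-1),
    ENNReal.toReal_ofReal hp0.le, ENNReal.toReal_ofReal (Real.rpow_nonneg hf0 _)] at hfin
  rw [hLHS, hRHS]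
  have key : X.toReal ≤ (p * R.toReal - f ^ p) / (p-1) := by
    rw [le_div_iff₀ hp1]
    nlinarith [hfin]
  calc X.toReal ≤ (p * R.toReal - f ^ p) / (p-1) := key
    _ = -(1 / (p - 1)) * f ^ p + p / (p - 1) * R.toReal := by field_simp; ring
end

section
/- Let q > 1 and τ ∈ (0,1] be fixed. Then for every α with 0 < α < 1 the equation −(z − α)^q + (1 − α)^{q−1} z^q = τ α (1 − α)^{q−1} has a unique solution z = z(α, τ) ∈ [1, ∞); moreover, for any function z : (0,1) → [1,∞) assigning to each α this unique solution, z(α, τ) → ω_q(τ) as α → 0⁺. -/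
open Set Filter

/-- `H_r(z) = r z^(r-1) - (r-1) z^r`. -/
noncomputable def Hfun (r z : ℝ) : ℝ := r * z ^ (r - 1) - (r - 1) * z ^ r

/-- `ω_r : [0,1] → [1, r/(r-1)]`, the inverse of `H_r` on `[1, r/(r-1)]`. -/
noncomputable def omegaFun (r t : ℝ) : ℝ :=
  Function.invFunOn (Hfun r) (Icc 1 (r / (r - 1))) t

private lemma f_contOn (q α : ℝ) (hα1 : α < 1) :
    ContinuousOn (fun z : ℝ => -(z - α) ^ q + (1 - α) ^ (q - 1) * z ^ q) (Ici 1) := by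
  apply ContinuousOn.add
  · apply ContinuousOn.neg
    apply ContinuousOn.rpow_const (continuousOn_id.sub continuousOn_const)
    intro z hz
    have : (1:ℝ) ≤ z := hz
    exact Or.inl (by intro h; simp only [Pi.sub_apply, id] at h; nlinarith)
  · apply ContinuousOn.mul continuousOn_const
    apply ContinuousOn.rpow_const continuousOn_id
    intro z hz
    have : (1:ℝ) ≤ z := hz
    exact Or.inl (by simp only [id]; intro h; nlinarith)

private lemma f_anti (q : ℝ) (hq : 1 < q) {α : ℝ} (hα : α ∈ Ioo (0:ℝ) 1) :
    StrictAntiOn (fun z : ℝ => -(z - α) ^ q + (1 - α) ^ (q - 1) * z ^ q) (Ici 1) := by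
  obtain ⟨hα1, hα2⟩ := hα
  apply strictAntiOn_of_deriv_neg (convex_Ici 1) (f_contOn q α hα2)
  intro z hz
  rw [interior_Ici] at hz
  have hz1 : (1:ℝ) < z := hz
  have hzα : 0 < z - α := by linarith
  have hz0 : (0:ℝ) < z := by linarith
  have h1 : HasDerivAt (fun z : ℝ => (z - α) ^ q) (1 * q * (z - α) ^ (q - 1)) z :=
    ((hasDerivAt_id z).sub_const α).rpow_const (Or.inl hzα.ne')
  have h2 : HasDerivAt (fun z : ℝ => z ^ q) (1 * q * z ^ (q - 1)) z :=
    (hasDerivAt_id z).rpow_const (Or.inl hz0.ne')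
  have hD : HasDerivAt (fun z : ℝ => -(z - α) ^ q + (1 - α) ^ (q - 1) * z ^ q)
      (-(1 * q * (z - α) ^ (q - 1)) + (1 - α) ^ (q - 1) * (1 * q * z ^ (q - 1))) z :=
    h1.neg.add (h2.const_mul _)
  rw [hD.deriv]
  have key : (1 - α) ^ (q - 1) * z ^ (q - 1) < (z - α) ^ (q - 1) := by
    rw [← Real.mul_rpow (by linarith) (by linarith)]
    exact Real.rpow_lt_rpow (mul_nonneg (by linarith) (by linarith)) (by nlinarith)
      (by linarith)
  nlinarith [mul_lt_mul_of_pos_left key (by linarith : (0:ℝ) < q)]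

private lemma f_at_one (q α : ℝ) (hq : 1 < q) (hα : α ∈ Ioo (0:ℝ) 1) :
    -((1:ℝ) - α) ^ q + (1 - α) ^ (q - 1) * (1:ℝ) ^ q = α * (1 - α) ^ (q - 1) := by
  have h1 : ((1:ℝ) - α) ^ q = (1 - α) ^ (q - 1) * (1 - α) := by
    rw [show q = q - 1 + 1 by ring, Real.rpow_add_one (by linarith [hα.2] : (1:ℝ) - α ≠ 0)]
    ring_nf
  rw [Real.one_rpow, h1]; ring

private lemma exists_sol (q τ : ℝ) (hq : 1 < q) (hτ : τ ∈ Ioc (0:ℝ) 1) {α : ℝ}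
    (hα : α ∈ Ioo (0:ℝ) 1) :
    ∃ z : ℝ, 1 ≤ z ∧
      -(z - α) ^ q + (1 - α) ^ (q - 1) * z ^ q = τ * α * (1 - α) ^ (q - 1) := by
  obtain ⟨hα1, hα2⟩ := hα
  have hq0 : (0:ℝ) < q := by linarith
  obtain ⟨X, hX0, hX1, hXq⟩ : ∃ X : ℝ, 0 ≤ X ∧ X < 1 ∧ X ^ q = (1 - α) ^ (q - 1) := by
    refine ⟨(1 - α) ^ ((q - 1) / q), Real.rpow_nonneg (by linarith) _,
      Real.rpow_lt_one (by linarith) (by linarith) (div_pos (by linarith) hq0), ?_⟩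
    rw [← Real.rpow_mul (by linarith), div_mul_cancel₀ _ hq0.ne']
  obtain ⟨M, hM1, hMle⟩ : ∃ M : ℝ, 1 ≤ M ∧ X * M ≤ M - α := by
    refine ⟨max 1 (α / (1 - X)), le_max_left _ _, ?_⟩
    have h := (div_le_iff₀ (by linarith : (0:ℝ) < 1 - X)).1 (le_max_right 1 (α / (1 - X)))
    nlinarith
  have hfM : -(M - α) ^ q + (1 - α) ^ (q - 1) * M ^ q ≤ 0 := by
    have h2 : (X * M) ^ q ≤ (M - α) ^ q :=
      Real.rpow_le_rpow (mul_nonneg hX0 (by linarith)) hMle hq0.le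
    rw [Real.mul_rpow hX0 (by linarith), hXq] at h2
    linarith
  have hP : (0:ℝ) < (1 - α) ^ (q - 1) := Real.rpow_pos_of_pos (by linarith) _
  have hT0 : 0 < τ * α * (1 - α) ^ (q - 1) := mul_pos (mul_pos hτ.1 hα1) hP
  have hT1 : τ * α * (1 - α) ^ (q - 1) ≤ α * (1 - α) ^ (q - 1) := by
    have h3 : τ * α ≤ α := by nlinarith [hτ.2]
    exact mul_le_mul_of_nonneg_right h3 hP.le
  have hIVT := intermediate_value_Icc' hM1 ((f_contOn q α hα2).mono Icc_subset_Ici_self)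
  have hmem : τ * α * (1 - α) ^ (q - 1) ∈
      Icc (-(M - α) ^ q + (1 - α) ^ (q - 1) * M ^ q)
        (-((1:ℝ) - α) ^ q + (1 - α) ^ (q - 1) * (1:ℝ) ^ q) := by
    constructor
    · linarith
    · rw [f_at_one q α hq ⟨hα1, hα2⟩]; linarith
  obtain ⟨z, hzmem, hzeq⟩ := hIVT hmem
  exact ⟨z, hzmem.1, hzeq⟩

private lemma slope_tendsto (q τ : ℝ) (hq : 1 < q) {u : ℝ} (hu : 1 ≤ u) :
    Tendsto (fun α : ℝ =>
        (-(u - α) ^ q + (1 - α) ^ (q - 1) * u ^ q - τ * α * (1 - α) ^ (q - 1)) / α)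
      (nhdsWithin 0 (Ioo (0:ℝ) 1)) (nhds (Hfun q u - τ)) := by
  have hu0 : (0:ℝ) < u := by linarith
  have a1 : HasDerivAt (fun α : ℝ => (u - α) ^ q) ((-1) * q * (u - 0) ^ (q - 1)) 0 :=
    ((hasDerivAt_id (0:ℝ)).const_sub u).rpow_const (Or.inl (by simpa using hu0.ne'))
  have a2 : HasDerivAt (fun α : ℝ => (1 - α) ^ (q - 1))
      ((-1) * (q - 1) * (1 - 0) ^ (q - 1 - 1)) 0 :=
    ((hasDerivAt_id (0:ℝ)).const_sub 1).rpow_const (Or.inl (by norm_num))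
  have hA : HasDerivAt (fun α : ℝ => -(u - α) ^ q + (1 - α) ^ (q - 1) * u ^ q)
      (Hfun q u) 0 := by
    have := a1.neg.add (a2.mul_const (u ^ q))
    refine this.congr_deriv ?_
    simp [Hfun]
    ring
  have hA0 : -(u - (0:ℝ)) ^ q + (1 - (0:ℝ)) ^ (q - 1) * u ^ q = 0 := by
    simp [Real.one_rpow]
  have hslope := hasDerivAt_iff_tendsto_slope.1 hA
  have hsub : Tendsto (fun α : ℝ => (-(u - α) ^ q + (1 - α) ^ (q - 1) * u ^ q) / α)
      (nhdsWithin 0 (Ioo (0:ℝ) 1)) (nhds (Hfun q u)) := by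
    have hle : nhdsWithin (0:ℝ) (Ioo (0:ℝ) 1) ≤ nhdsWithin 0 {(0:ℝ)}ᶜ :=
      nhdsWithin_mono _ (fun x hx => ne_of_gt hx.1)
    refine (hslope.mono_left hle).congr (fun α => ?_)
    rw [slope_def_field, hA0]
    ring
  have hc : Tendsto (fun α : ℝ => τ * (1 - α) ^ (q - 1))
      (nhdsWithin 0 (Ioo (0:ℝ) 1)) (nhds (τ * 1)) := by
    have h0 : ContinuousAt (fun α : ℝ => (1 - α) ^ (q - 1)) 0 := a2.continuousAt
    have h2 : Tendsto (fun α : ℝ => (1 - α) ^ (q - 1)) (nhdsWithin 0 (Ioo (0:ℝ) 1))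
        (nhds ((1 - (0:ℝ)) ^ (q - 1))) := h0.tendsto.mono_left nhdsWithin_le_nhds
    have h3 := h2.const_mul τ
    rwa [show ((1:ℝ) - 0) ^ (q - 1) = 1 by simp] at h3
  have hfin := hsub.sub hc
  rw [mul_one] at hfin
  refine hfin.congr' ?_
  filter_upwards [self_mem_nhdsWithin] with α hα
  have hα0 : α ≠ 0 := ne_of_gt hα.1
  field_simp

private lemma H_anti (q : ℝ) (hq : 1 < q) : StrictAntiOn (Hfun q) (Ici 1) := by
  apply strictAntiOn_of_deriv_neg (convex_Ici 1)
  · unfold Hfun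
    apply ContinuousOn.sub
    · refine continuousOn_const.mul (continuousOn_id.rpow_const fun z hz => Or.inl ?_)
      have : (1:ℝ) ≤ z := hz
      simp only [id]; intro h; rw [h] at this; norm_num at this
    · refine continuousOn_const.mul (continuousOn_id.rpow_const fun z hz => Or.inl ?_)
      have : (1:ℝ) ≤ z := hz
      simp only [id]; intro h; rw [h] at this; norm_num at this
  · intro z hz
    rw [interior_Ici] at hz
    have hz1 : (1:ℝ) < z := hz
    have hz0 : (0:ℝ) < z := by linarith
    have h1 : HasDerivAt (fun z : ℝ => z ^ (q - 1)) (1 * (q - 1) * z ^ (q - 1 - 1)) z :=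
      (hasDerivAt_id z).rpow_const (Or.inl hz0.ne')
    have h2 : HasDerivAt (fun z : ℝ => z ^ q) (1 * q * z ^ (q - 1)) z :=
      (hasDerivAt_id z).rpow_const (Or.inl hz0.ne')
    have hD : HasDerivAt (Hfun q)
        (q * (1 * (q - 1) * z ^ (q - 1 - 1)) - (q - 1) * (1 * q * z ^ (q - 1))) z :=
      (h1.const_mul q).sub (h2.const_mul (q - 1))
    rw [hD.deriv]
    have hlt : z ^ (q - 1 - 1) < z ^ (q - 1) :=
      (Real.rpow_lt_rpow_left_iff hz1).2 (by linarith)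
    nlinarith [mul_lt_mul_of_pos_left hlt (by nlinarith : (0:ℝ) < q * (q - 1))]

private lemma H_one (q : ℝ) : Hfun q 1 = 1 := by simp [Hfun]

private lemma H_top (q : ℝ) (hq : 1 < q) : Hfun q (q / (q - 1)) = 0 := by
  have hb0 : (0:ℝ) < q / (q - 1) := div_pos (by linarith) (by linarith)
  have hbq : (q / (q - 1) : ℝ) ^ q = (q / (q - 1)) ^ (q - 1) * (q / (q - 1)) := by
    have h := Real.rpow_add_one hb0.ne' (q - 1)
    rw [sub_add_cancel] at h
    exact h
  have hkey : (q - 1) * (q / (q - 1)) = q := by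
    rw [mul_div_assoc']
    exact mul_div_cancel_left₀ q (by linarith : q - 1 ≠ 0)
  unfold Hfun
  rw [hbq]
  calc q * (q / (q - 1)) ^ (q - 1) - (q - 1) * ((q / (q - 1)) ^ (q - 1) * (q / (q - 1)))
      = (q / (q - 1)) ^ (q - 1) * (q - (q - 1) * (q / (q - 1))) := by ring
    _ = 0 := by rw [hkey]; ring

private lemma omega_spec (q τ : ℝ) (hq : 1 < q) (hτ : τ ∈ Ioc (0:ℝ) 1) :
    omegaFun q τ ∈ Icc (1:ℝ) (q / (q - 1)) ∧ Hfun q (omegaFun q τ) = τ := by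
  have hb1 : (1:ℝ) ≤ q / (q - 1) := by
    rw [le_div_iff₀ (by linarith)]; linarith
  have hcont : ContinuousOn (Hfun q) (Icc 1 (q / (q - 1))) := by
    unfold Hfun
    apply ContinuousOn.sub
    · refine continuousOn_const.mul (continuousOn_id.rpow_const fun z hz => Or.inl ?_)
      simp only [id]; intro h; rw [h] at hz; exact absurd hz.1 (by norm_num)
    · refine continuousOn_const.mul (continuousOn_id.rpow_const fun z hz => Or.inl ?_)
      simp only [id]; intro h; rw [h] at hz; exact absurd hz.1 (by norm_num)
  have hIVT := intermediate_value_Icc' hb1 hcont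
  have hmem : τ ∈ Icc (Hfun q (q / (q - 1))) (Hfun q 1) := by
    rw [H_top q hq, H_one]
    exact ⟨hτ.1.le, hτ.2⟩
  obtain ⟨x, hx, hHx⟩ := hIVT hmem
  exact ⟨Function.invFunOn_mem ⟨x, hx, hHx⟩, Function.invFunOn_eq ⟨x, hx, hHx⟩⟩

theorem stmt11 (q τ : ℝ) (hq : 1 < q) (hτ : τ ∈ Ioc (0 : ℝ) 1) :
    (∀ α ∈ Ioo (0 : ℝ) 1, ∃! z : ℝ, 1 ≤ z ∧
        -(z - α) ^ q + (1 - α) ^ (q - 1) * z ^ q = τ * α * (1 - α) ^ (q - 1)) ∧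
    ∀ z : ℝ → ℝ,
      (∀ α ∈ Ioo (0 : ℝ) 1, 1 ≤ z α ∧
        -(z α - α) ^ q + (1 - α) ^ (q - 1) * z α ^ q = τ * α * (1 - α) ^ (q - 1)) →
      Tendsto z (nhdsWithin 0 (Ioo (0 : ℝ) 1)) (nhds (omegaFun q τ)) := by
  constructor
  · intro α hα
    obtain ⟨z₀, hz₀1, hz₀eq⟩ := exists_sol q τ hq hτ hα
    refine ⟨z₀, ⟨hz₀1, hz₀eq⟩, fun y hy => ?_⟩
    exact (f_anti q hq hα).injOn (mem_Ici.2 hy.1) (mem_Ici.2 hz₀1) (hy.2.trans hz₀eq.symm)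
  · intro z hz
    obtain ⟨hωmem, hωτ⟩ := omega_spec q τ hq hτ
    have hω1 : (1:ℝ) ≤ omegaFun q τ := hωmem.1
    have key : ∀ α ∈ Ioo (0:ℝ) 1, ∀ w : ℝ, 1 ≤ w →
        ((-(w - α) ^ q + (1 - α) ^ (q - 1) * w ^ q - τ * α * (1 - α) ^ (q - 1)) / α < 0 →
          z α < w) ∧
        (0 < (-(w - α) ^ q + (1 - α) ^ (q - 1) * w ^ q - τ * α * (1 - α) ^ (q - 1)) / α →
          w < z α) := by
      intro α hα w hw
      obtain ⟨hz1, hzeq⟩ := hz α hα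
      have hanti := f_anti q hq hα
      constructor
      · intro h
        have hneg : -(w - α) ^ q + (1 - α) ^ (q - 1) * w ^ q
            < τ * α * (1 - α) ^ (q - 1) := by
          have h2 := mul_neg_of_neg_of_pos h hα.1
          rw [div_mul_cancel₀ _ (ne_of_gt hα.1)] at h2
          linarith
        by_contra hcon
        push_neg at hcon
        have h3 := hanti.antitoneOn (mem_Ici.2 hw) (mem_Ici.2 hz1) hcon
        rw [hzeq] at h3
        linarith
      · intro h
        have hpos : τ * α * (1 - α) ^ (q - 1)
            < -(w - α) ^ q + (1 - α) ^ (q - 1) * w ^ q := by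
          have h2 := mul_pos h hα.1
          rw [div_mul_cancel₀ _ (ne_of_gt hα.1)] at h2
          linarith
        by_contra hcon
        push_neg at hcon
        have h3 := hanti.antitoneOn (mem_Ici.2 hz1) (mem_Ici.2 hw) hcon
        rw [hzeq] at h3
        linarith
    rw [Metric.tendsto_nhds]
    intro ε hε
    have hu1 : (1:ℝ) ≤ omegaFun q τ + ε := by linarith
    have hHu : Hfun q (omegaFun q τ + ε) - τ < 0 := by
      have := H_anti q hq (mem_Ici.2 hω1) (mem_Ici.2 hu1) (by linarith)
      rw [hωτ] at this; linarith
    have hup := (slope_tendsto q τ hq hu1).eventually_lt_const hHu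
    have hlow : ∀ᶠ α in nhdsWithin 0 (Ioo (0:ℝ) 1),
        α ∈ Ioo (0:ℝ) 1 → omegaFun q τ - ε < z α := by
      by_cases hcase : 1 ≤ omegaFun q τ - ε
      · have hHl : (0:ℝ) < Hfun q (omegaFun q τ - ε) - τ := by
          have := H_anti q hq (mem_Ici.2 hcase) (mem_Ici.2 hω1) (by linarith)
          rw [hωτ] at this; linarith
        filter_upwards [(slope_tendsto q τ hq hcase).eventually_const_lt hHl] with α h2 hα
        exact (key α hα _ hcase).2 h2
      · filter_upwards with α hα
        have := (hz α hα).1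
        push_neg at hcase
        linarith
    filter_upwards [hup, hlow, self_mem_nhdsWithin] with α h1 h2 hα
    have hzu := (key α hα _ hu1).1 h1
    have hzl := h2 hα
    rw [Real.dist_eq, abs_lt]
    constructor <;> linarith
end

section
/- Let 1 < q < p and let f, A, F be real numbers with 0 < f, f^q ≤ A, and A^{p/q} ≤ F. Then the quantity k = (p f^{p−q} A − (p−q) f^p)/F satisfies 0 < k ≤ q. -/
theorem stmt13 (p q f A F : ℝ) (hq : 1 < q) (hqp : q < p) (hf : 0 < f)
    (hA : f ^ q ≤ A) (hF : A ^ (p / q) ≤ F) :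
    0 < (p * f ^ (p - q) * A - (p - q) * f ^ p) / F ∧
      (p * f ^ (p - q) * A - (p - q) * f ^ p) / F ≤ q := by
  have hq0 : (0:ℝ) < q := by linarith
  have hp0 : (0:ℝ) < p := by linarith
  have hx : 0 < f ^ q := Real.rpow_pos_of_pos hf q
  have hfp : 0 < f ^ p := Real.rpow_pos_of_pos hf p
  have hfpq : 0 < f ^ (p - q) := Real.rpow_pos_of_pos hf _
  have hmul : f ^ (p - q) * f ^ q = f ^ p := by
    rw [← Real.rpow_add hf]; ring_nf
  have hA0 : 0 < A := lt_of_lt_of_le hx hA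
  have ht : (1:ℝ) < p / q := (one_lt_div hq0).2 hqp
  -- A^(p/q) ≥ tangent line at f^q
  have hber := one_add_mul_self_le_rpow_one_add
    (s := A / f ^ q - 1) (p := p / q) (by
      have : 0 ≤ A / f ^ q - 1 := by
        rw [sub_nonneg, le_div_iff₀ hx, one_mul]; exact hA
      linarith) ht.le
  have h1s : 1 + (A / f ^ q - 1) = A / f ^ q := by ring
  rw [h1s, Real.div_rpow hA0.le hx.le] at hber
  have hxt : (f ^ q) ^ (p / q) = f ^ p := by
    rw [← Real.rpow_mul hf.le, mul_div_cancel₀ _ hq0.ne']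
  rw [hxt] at hber
  -- hber : 1 + p/q * (A / f^q - 1) ≤ A^(p/q) / f^p
  have hber' : f ^ p * (1 + p / q * (A / f ^ q - 1)) ≤ A ^ (p / q) := by
    rw [← le_div_iff₀' hfp]; exact hber
  have hkey : p * f ^ (p - q) * A - (p - q) * f ^ p ≤ q * A ^ (p / q) := by
    have hexp : q * (f ^ p * (1 + p / q * (A / f ^ q - 1)))
        = p * f ^ (p - q) * A - (p - q) * f ^ p := by
      field_simp
      linear_combination (-(p * A)) * hmul
    nlinarith [hber', hq0]
  have hF0 : 0 < F := lt_of_lt_of_le (Real.rpow_pos_of_pos hA0 _) hF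
  have hN : 0 < p * f ^ (p - q) * A - (p - q) * f ^ p := by
    have : q * f ^ p ≤ p * f ^ (p - q) * A - (p - q) * f ^ p := by
      nlinarith [mul_le_mul_of_nonneg_left hA (mul_pos hp0 hfpq).le, hmul]
    nlinarith [mul_pos hq0 hfp]
  constructor
  · exact div_pos hN hF0
  · rw [div_le_iff₀ hF0]
    calc p * f ^ (p - q) * A - (p - q) * f ^ p ≤ q * A ^ (p / q) := hkey
      _ ≤ q * F := by nlinarith
end

section
/- Let 1 < q < p and define K(β) = (q−1)β/(β+1)^q + ((p−q)/p)·(β+1)^{−(q−1)} for β ∈ [0, 1/(p−1)). Then K is strictly increasing on (0, 1/(p−1)) (its derivative equals (q−1)q(1 − β(p−1)) / (p(β+1)^{q+1}) > 0 there), and consequently K(β) > (p−q)/p for every β ∈ (0, 1/(p−1)). -/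
open Set

theorem stmt17 (p q : ℝ) (hq : 1 < q) (hqp : q < p) (K : ℝ → ℝ)
    (hK : ∀ β, K β = (q - 1) * β / (β + 1) ^ q + (p - q) / p * (β + 1) ^ (-(q - 1))) :
    StrictMonoOn K (Ioo 0 (1 / (p - 1))) ∧
    (∀ β ∈ Ioo (0 : ℝ) (1 / (p - 1)),
      HasDerivAt K ((q - 1) * q * (1 - β * (p - 1)) / (p * (β + 1) ^ (q + 1))) β ∧
        0 < (q - 1) * q * (1 - β * (p - 1)) / (p * (β + 1) ^ (q + 1))) ∧
    ∀ β ∈ Ioo (0 : ℝ) (1 / (p - 1)), (p - q) / p < K β := by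
  have hp1 : (1 : ℝ) < p := hq.trans hqp
  have hp0 : (0 : ℝ) < p := by linarith
  have hKf : K = fun β : ℝ =>
      (q - 1) * β / (β + 1) ^ q + (p - q) / p * (β + 1) ^ (-(q - 1)) := funext hK
  -- derivative at every β > -1
  have hd : ∀ β : ℝ, -1 < β →
      HasDerivAt K ((q - 1) * q * (1 - β * (p - 1)) / (p * (β + 1) ^ (q + 1))) β := by
    intro β hβ
    have ht : (0 : ℝ) < β + 1 := by linarith
    have htne : (β + 1) ≠ 0 := ne_of_gt ht
    have h1 : HasDerivAt (fun x : ℝ => x + 1) 1 β := (hasDerivAt_id β).add_const 1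
    have h2 : HasDerivAt (fun x : ℝ => (x + 1) ^ q) (q * (β + 1) ^ (q - 1) * 1) β :=
      HasDerivAt.comp (h₂ := fun x : ℝ => x ^ q) β (Real.hasDerivAt_rpow_const (p := q) (Or.inl htne)) h1
    have h3 : HasDerivAt (fun x : ℝ => (q - 1) * x) (q - 1) β := by
      simpa using (hasDerivAt_id β).const_mul (q - 1)
    have hgne : ((β : ℝ) + 1) ^ q ≠ 0 := (Real.rpow_pos_of_pos ht q).ne'
    have h4 : HasDerivAt (fun x : ℝ => (q - 1) * x / (x + 1) ^ q)
        (((q - 1) * (β + 1) ^ q - (q - 1) * β * (q * (β + 1) ^ (q - 1) * 1)) /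
          ((β + 1) ^ q) ^ 2) β := h3.div h2 hgne
    have h5 : HasDerivAt (fun x : ℝ => (x + 1) ^ (-(q - 1)))
        (-(q - 1) * (β + 1) ^ (-(q - 1) - 1) * 1) β :=
      HasDerivAt.comp (h₂ := fun x : ℝ => x ^ (-(q - 1))) β (Real.hasDerivAt_rpow_const (p := -(q - 1)) (Or.inl htne)) h1
    have h6 := h4.add (h5.const_mul ((p - q) / p))
    rw [hKf]
    refine h6.congr_deriv ?_
    have hA : (0 : ℝ) < (β + 1) ^ (q - 1) := Real.rpow_pos_of_pos ht _
    have e1 : (β + 1) ^ q = (β + 1) ^ (q - 1) * (β + 1) := by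
      rw [← Real.rpow_add_one htne]; ring_nf
    have e2 : (β + 1) ^ (q + 1) = (β + 1) ^ (q - 1) * (β + 1) * (β + 1) := by
      rw [← Real.rpow_add_one htne, ← Real.rpow_add_one htne]; ring_nf
    have e3 : (β + 1) ^ (-(q - 1) - 1) = ((β + 1) ^ (q - 1) * (β + 1))⁻¹ := by
      rw [← e1, ← Real.rpow_neg ht.le]; ring_nf
    rw [e2, e1, e3]
    field_simp
    ring
  -- strict mono on Ico
  have hmono : StrictMonoOn K (Ico 0 (1 / (p - 1))) := by
    apply strictMonoOn_of_deriv_pos (convex_Ico _ _)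
    · intro x hx
      exact (hd x (by linarith [hx.1])).differentiableAt.continuousAt.continuousWithinAt
    · intro x hx
      rw [interior_Ico] at hx
      obtain ⟨hx0, hx1⟩ := hx
      rw [(hd x (by linarith)).deriv]
      have hpm : (0 : ℝ) < p - 1 := by linarith
      have h1x : 0 < 1 - x * (p - 1) := by
        have := (lt_div_iff₀ hpm).mp hx1
        nlinarith
      have h2 : (0 : ℝ) < (x + 1) ^ (q + 1) := Real.rpow_pos_of_pos (by linarith) _
      exact div_pos (mul_pos (mul_pos (by linarith) (by linarith)) h1x) (mul_pos hp0 h2)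
  refine ⟨hmono.mono (Ioo_subset_Ico_self), ?_, ?_⟩
  · intro β hβ
    refine ⟨hd β (by linarith [hβ.1]), ?_⟩
    have hpm : (0 : ℝ) < p - 1 := by linarith
    have h1x : 0 < 1 - β * (p - 1) := by
      have := (lt_div_iff₀ hpm).mp hβ.2
      nlinarith
    have h2 : (0 : ℝ) < (β + 1) ^ (q + 1) := Real.rpow_pos_of_pos (by linarith [hβ.1]) _
    exact div_pos (mul_pos (mul_pos (by linarith) (by linarith)) h1x) (mul_pos hp0 h2)
  · intro β hβ
    have h0 : (0 : ℝ) ∈ Ico (0 : ℝ) (1 / (p - 1)) := ⟨le_refl _, one_div_pos.mpr (by linarith)⟩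
    have hb : β ∈ Ico (0 : ℝ) (1 / (p - 1)) := ⟨hβ.1.le, hβ.2⟩
    have := hmono h0 hb hβ.1
    have hK0 : K 0 = (p - q) / p := by
      rw [hK 0]; simp
    linarith [hK0 ▸ this]
end

section
/- Let 1 < q < p, let β ∈ (0, 1/(p−1)), and set A_β = (q−1)β/(β+1)^q + ((p−q)/p)·(β+1)^{−(q−1)}. Then the function h_β(y) = y^{p−q} − A_β y^p is strictly decreasing on (1, ∞). -/
open Set

-- auxiliary: the coefficient A_β exceeds (p-q)/p
lemma keyA (p q β : ℝ) (hq : 1 < q) (hqp : q < p) (hβ0 : 0 < β) (hβ1 : β < 1 / (p - 1)) :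
    (p - q) / p < (q - 1) * β / (β + 1) ^ q + (p - q) / p * (β + 1) ^ (-(q - 1)) := by
  have hp1 : 1 < p := hq.trans hqp
  have hp0 : 0 < p := by linarith
  have hp1' : 0 < p - 1 := by linarith
  set c : ℝ := (p - q) / p with hc
  have hc0 : 0 < c := div_pos (by linarith) hp0
  set K : ℝ := (p / (p - 1)) ^ q with hK
  -- Bernoulli: c * K < 1
  have hber : 1 + q * (-(1/p)) < (1 + -(1/p)) ^ q := by
    apply one_add_mul_self_lt_rpow_one_add
    · have : 1 / p ≤ 1 := by rw [div_le_one hp0]; linarith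
      linarith
    · have : 0 < 1 / p := by positivity
      intro h; linarith [this]
    · exact hq
  have h1p : (1 : ℝ) + -(1/p) = (p - 1) / p := by field_simp; ring
  have hKpos : 0 < K := by
    apply Real.rpow_pos_of_pos; positivity
  have hcK : c * K < 1 := by
    have hinv : ((p - 1) / p) ^ q = K⁻¹ := by
      rw [hK, ← Real.inv_rpow (by positivity), inv_div]
    have h2 : 1 - q / p < K⁻¹ := by
      rw [← hinv]
      calc 1 - q / p = 1 + q * (-(1/p)) := by ring
        _ < (1 + -(1/p)) ^ q := hber
        _ = ((p - 1)/p) ^ q := by rw [h1p]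
    have h3 : c = 1 - q / p := by rw [hc]; field_simp
    rw [h3]
    calc (1 - q/p) * K < K⁻¹ * K := mul_lt_mul_of_pos_right h2 hKpos
      _ = 1 := inv_mul_cancel₀ (ne_of_gt hKpos)
  -- convexity: (β+1)^q ≤ (1-t) + t*K, t = β*(p-1)
  set t : ℝ := β * (p - 1) with ht
  have ht0 : 0 < t := mul_pos hβ0 hp1'
  have ht1 : t < 1 := by
    calc β * (p - 1) < (1/(p-1)) * (p - 1) := mul_lt_mul_of_pos_right hβ1 hp1'
      _ = 1 := by field_simp
  have hconv : (β + 1) ^ q ≤ (1 - t) + t * K := by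
    have := (convexOn_rpow hq.le).2 (x := (1:ℝ)) (y := p / (p-1))
      (by simp : (1:ℝ) ∈ Ici (0:ℝ))
      (mem_Ici.mpr (by positivity : (0:ℝ) ≤ p/(p-1)))
      (by linarith : (0:ℝ) ≤ 1 - t) ht0.le (by ring)
    simp only [smul_eq_mul, mul_one, Real.one_rpow] at this
    have harg : 1 - t + t * (p / (p - 1)) = β + 1 := by
      rw [ht]; field_simp; ring
    rw [harg] at this
    rw [hK]
    linarith [this]
  -- conclude
  have hu0 : (0:ℝ) < (β + 1) ^ q := Real.rpow_pos_of_pos (by linarith) q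
  have hmain : c * (β + 1) ^ q < (q - 1) * β + c * (β + 1) := by
    have h1 : c * (β + 1) ^ q ≤ c * ((1 - t) + t * K) :=
      mul_le_mul_of_nonneg_left hconv hc0.le
    have h2 : c * t * K < t := by
      calc c * t * K = t * (c * K) := by ring
        _ < t * 1 := mul_lt_mul_of_pos_left hcK ht0
        _ = t := mul_one t
    have h3 : t * (1 - c) = β * (q - 1 + c) := by
      rw [ht, hc]; field_simp; ring
    nlinarith [h1, h2, h3]
  have hrw : (β + 1) ^ (-(q - 1)) = (β + 1) / (β + 1) ^ q := by
    rw [eq_div_iff (ne_of_gt hu0), ← Real.rpow_add (by linarith : (0:ℝ) < β + 1)]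
    have : -(q-1) + q = 1 := by ring
    rw [this, Real.rpow_one]
  have hsum : (q - 1) * β / (β + 1) ^ q + c * ((β + 1) / (β + 1) ^ q)
      = ((q - 1) * β + c * (β + 1)) / (β + 1) ^ q := by
    field_simp
  rw [hrw, hsum, lt_div_iff₀ hu0]
  linarith [hmain]

theorem stmt18 (p q β : ℝ) (hq : 1 < q) (hqp : q < p)
    (hβ : β ∈ Ioo (0 : ℝ) (1 / (p - 1))) :
    StrictAntiOn (fun y : ℝ => y ^ (p - q) -
        ((q - 1) * β / (β + 1) ^ q + (p - q) / p * (β + 1) ^ (-(q - 1))) * y ^ p)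
      (Ioi 1) := by
  obtain ⟨hβ0, hβ1⟩ := hβ
  have hA := keyA p q β hq hqp hβ0 hβ1
  set A : ℝ := (q - 1) * β / (β + 1) ^ q + (p - q) / p * (β + 1) ^ (-(q - 1)) with hAdef
  have hp1 : 1 < p := hq.trans hqp
  have hp0 : 0 < p := by linarith
  have hpq : 0 < p - q := by linarith
  have hderiv : ∀ y : ℝ, 1 < y →
      HasDerivAt (fun y : ℝ => y ^ (p - q) - A * y ^ p)
        ((p - q) * y ^ (p - q - 1) - A * (p * y ^ (p - 1))) y := by
    intro y hy
    have hy0 : y ≠ 0 := by linarith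
    exact ((Real.hasDerivAt_rpow_const (Or.inl hy0)).sub
      ((Real.hasDerivAt_rpow_const (p := p) (Or.inl hy0)).const_mul A))
  apply strictAntiOn_of_deriv_neg (convex_Ioi 1)
  · intro y hy
    exact ((hderiv y hy).continuousAt).continuousWithinAt
  · intro y hy
    rw [interior_Ioi] at hy
    rw [(hderiv y hy).deriv]
    have hy1 : (1:ℝ) < y := hy
    have hy0 : (0:ℝ) < y := by linarith
    have hmono : y ^ (p - q - 1) ≤ y ^ (p - 1) :=
      Real.rpow_le_rpow_of_exponent_le hy1.le (by linarith)
    have hpow : 0 < y ^ (p - 1) := Real.rpow_pos_of_pos hy0 _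
    have h1 : (p - q) * y ^ (p - q - 1) ≤ (p - q) * y ^ (p - 1) :=
      mul_le_mul_of_nonneg_left hmono hpq.le
    have h2 : (p - q) * y ^ (p - 1) < A * (p * y ^ (p - 1)) := by
      have : (p - q) / p * (p * y ^ (p - 1)) < A * (p * y ^ (p - 1)) :=
        mul_lt_mul_of_pos_right hA (by positivity)
      calc (p - q) * y ^ (p - 1) = (p - q) / p * (p * y ^ (p - 1)) := by
            field_simp
        _ < A * (p * y ^ (p - 1)) := this
    linarith
end
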